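/- Let f(X) := Σ_{i=n-r+1}^{n} σ_i(X)^2 + (1/2)‖A(X) − b‖^2 and g(X,V) := ‖XV‖_F^2 + (1/2)‖A(X) − b‖^2. For every X ∈ R^{m×n} and every V ∈ E(X), the Fréchet subdifferential of f at X is contained in the singleton {∇_X g(X,V)}, i.e. if Z is a Fréchet subgradient of f at X then Z = ∇_X g(X,V). -/

import Mathlib

open Matrix Finset Filter Topology Pointwise

noncomputable section

namespace RankEB

/-- Squared Frobenius norm of a matrix. -/
def frob2 {a b : ℕ} (M : Matrix (Fin a) (Fin b) ℝ) : ℝ := ∑ i, ∑ j, (M i j) ^ 2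

/-- Frobenius norm of a matrix. -/
def frob {a b : ℕ} (M : Matrix (Fin a) (Fin b) ℝ) : ℝ := Real.sqrt (frob2 M)

/-- Trace inner product of matrices. -/
def minner {a b : ℕ} (A B : Matrix (Fin a) (Fin b) ℝ) : ℝ := ∑ i, ∑ j, A i j * B i j

/-- Squared Euclidean norm on `ℝ^l`. -/
def enorm2 {l : ℕ} (v : Fin l → ℝ) : ℝ := ∑ i, (v i) ^ 2

theorem isHermitian_transpose_mul_self {m n : ℕ} (X : Matrix (Fin m) (Fin n) ℝ) :
    (Xᵀ * X).IsHermitian := by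
  simpa using Matrix.isHermitian_conjTranspose_mul_self X

/-- Singular values of a real matrix, in nonincreasing order:
`sVal X i = sqrt` of the `i`-th largest eigenvalue of `Xᵀ X`. -/
def sVal {m n : ℕ} (X : Matrix (Fin m) (Fin n) ℝ) (i : Fin n) : ℝ :=
  Real.sqrt ((isHermitian_transpose_mul_self X).eigenvalues
    (Tuple.sort (isHermitian_transpose_mul_self X).eigenvalues i.rev))

/-- Sum of the squares of the `n - r` smallest singular values of `X`,
i.e. `∑_{i=r+1}^{n} σ_i(X)^2` (1-indexed with `σ₁ ≥ ⋯ ≥ σₙ`). -/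
def tailSum {m n : ℕ} (r : ℕ) (X : Matrix (Fin m) (Fin n) ℝ) : ℝ :=
  ∑ i ∈ Finset.univ.filter (fun i : Fin n => r ≤ (i : ℕ)), (sVal X i) ^ 2


lemma frob2_nonneg {a b : ℕ} (M : Matrix (Fin a) (Fin b) ℝ) : 0 ≤ frob2 M :=
  Finset.sum_nonneg fun i _ => Finset.sum_nonneg fun j _ => sq_nonneg _

lemma enorm2_nonneg {l : ℕ} (v : Fin l → ℝ) : 0 ≤ enorm2 v :=
  Finset.sum_nonneg fun i _ => sq_nonneg _

lemma frob_sq {a b : ℕ} (M : Matrix (Fin a) (Fin b) ℝ) : frob M ^ 2 = frob2 M :=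
  Real.sq_sqrt (frob2_nonneg M)

lemma frob_nonneg {a b : ℕ} (M : Matrix (Fin a) (Fin b) ℝ) : 0 ≤ frob M :=
  Real.sqrt_nonneg _

lemma frob2_smul {a b : ℕ} (t : ℝ) (M : Matrix (Fin a) (Fin b) ℝ) :
    frob2 (t • M) = t^2 * frob2 M := by
  simp [frob2, Finset.mul_sum, mul_pow]

lemma frob_smul {a b : ℕ} (t : ℝ) (ht : 0 ≤ t) (M : Matrix (Fin a) (Fin b) ℝ) :
    frob (t • M) = t * frob M := by
  rw [frob, frob2_smul, Real.sqrt_mul (sq_nonneg t), Real.sqrt_sq ht, frob]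

lemma minner_self {a b : ℕ} (M : Matrix (Fin a) (Fin b) ℝ) : minner M M = frob2 M := by
  simp [minner, frob2, sq]

lemma minner_smul_right {a b : ℕ} (t : ℝ) (M N : Matrix (Fin a) (Fin b) ℝ) :
    minner M (t • N) = t * minner M N := by
  simp [minner, Finset.mul_sum]; ring_nf
  exact Finset.sum_congr rfl fun i _ => Finset.sum_congr rfl fun j _ => by ring

lemma minner_sub_left {a b : ℕ} (M N P : Matrix (Fin a) (Fin b) ℝ) :
    minner (M - N) P = minner M P - minner N P := by
  simp [minner, sub_mul, Finset.sum_sub_distrib]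

lemma minner_add_left {a b : ℕ} (M N P : Matrix (Fin a) (Fin b) ℝ) :
    minner (M + N) P = minner M P + minner N P := by
  simp [minner, add_mul, Finset.sum_add_distrib]

lemma minner_smul_left {a b : ℕ} (t : ℝ) (M N : Matrix (Fin a) (Fin b) ℝ) :
    minner (t • M) N = t * minner M N := by
  simp [minner, Finset.mul_sum, mul_assoc]

lemma frob2_add {a b : ℕ} (M N : Matrix (Fin a) (Fin b) ℝ) :
    frob2 (M + N) = frob2 M + 2 * minner M N + frob2 N := by
  simp only [frob2, minner, Matrix.add_apply, Finset.mul_sum, ← Finset.sum_add_distrib]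
  exact Finset.sum_congr rfl fun i _ => Finset.sum_congr rfl fun j _ => by ring

lemma enorm2_add {l : ℕ} (u v : Fin l → ℝ) :
    enorm2 (u + v) = enorm2 u + 2 * ∑ i, u i * v i + enorm2 v := by
  simp only [enorm2, Pi.add_apply, Finset.mul_sum, ← Finset.sum_add_distrib]
  exact Finset.sum_congr rfl fun i _ => by ring

lemma minner_mul_right {a b c : ℕ} (M : Matrix (Fin a) (Fin c) ℝ)
    (H : Matrix (Fin a) (Fin b) ℝ) (V : Matrix (Fin b) (Fin c) ℝ) :
    minner M (H * V) = minner (M * Vᵀ) H := by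
  simp only [minner, Matrix.mul_apply, Matrix.transpose_apply, Finset.mul_sum, Finset.sum_mul]
  refine Finset.sum_congr rfl fun i _ => ?_
  rw [Finset.sum_comm]
  exact Finset.sum_congr rfl fun k _ => Finset.sum_congr rfl fun j _ => by ring

lemma comb (n k : ℕ) (hk : k ≤ n) (μ c : Fin n → ℝ) (hμ : Monotone μ)
    (hc0 : ∀ i, 0 ≤ c i) (hc1 : ∀ i, c i ≤ 1) (hs : ∑ i, c i = (k : ℝ)) :
    ∑ i ∈ Finset.univ.filter (fun i : Fin n => (i:ℕ) < k), μ i ≤ ∑ i, μ i * c i := by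
  set e : Fin n → ℝ := fun i => if (i:ℕ) < k then 1 else 0 with he
  have hse : ∑ i, e i = (k : ℝ) := by
    rw [he]
    rw [Fin.sum_univ_eq_sum_range (fun i => if i < k then (1:ℝ) else 0) n]
    rw [← Finset.sum_filter]
    have : (Finset.range n).filter (· < k) = Finset.range k := by
      ext x; simp; omega
    simp [this]
  have hmue : ∑ i ∈ Finset.univ.filter (fun i : Fin n => (i:ℕ) < k), μ i = ∑ i, μ i * e i := by
    rw [Finset.sum_filter]
    exact Finset.sum_congr rfl fun i _ => by by_cases h : (i:ℕ) < k <;> simp [he, h]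
  rw [hmue]
  rcases lt_or_eq_of_le hk with hkn | hkn
  · set t := μ ⟨k, hkn⟩ with ht
    have key : ∀ i : Fin n, 0 ≤ (μ i - t) * (c i - e i) := by
      intro i
      by_cases h : (i:ℕ) < k
      · have h1 : μ i ≤ t := hμ (by simp [Fin.le_def]; omega)
        have h2 : c i - e i ≤ 0 := by simp [he, h]; linarith [hc1 i]
        nlinarith
      · have h1 : t ≤ μ i := hμ (by simp [Fin.le_def]; omega)
        have h2 : 0 ≤ c i - e i := by simp [he, h]; exact hc0 i
        nlinarith
    have expand : ∑ i, (μ i - t) * (c i - e i)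
        = ∑ i, μ i * c i - ∑ i, μ i * e i - t * (∑ i, c i) + t * (∑ i, e i) := by
      simp only [Finset.mul_sum, ← Finset.sum_add_distrib, ← Finset.sum_sub_distrib]
      exact Finset.sum_congr rfl fun i _ => by ring
    have h0 : 0 ≤ ∑ i, (μ i - t) * (c i - e i) := Finset.sum_nonneg fun i _ => key i
    rw [expand, hs, hse] at h0
    linarith
  · have hc : ∀ i : Fin n, c i = 1 := by
      have hz : ∑ i, (1 - c i) = 0 := by
        rw [Finset.sum_sub_distrib]
        simp [hs, hkn]
      intro i
      have := (Finset.sum_eq_zero_iff_of_nonneg (fun i _ => by linarith [hc1 i])).mp hz i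
        (Finset.mem_univ i)
      linarith
    have : ∀ i : Fin n, e i = 1 := fun i => by have := i.isLt; simp [he]; omega
    refine le_of_eq (Finset.sum_congr rfl fun i _ => by rw [this i, hc i])

lemma kyfan {m n : ℕ} (r : ℕ) (W : Matrix (Fin m) (Fin n) ℝ)
    (V : Matrix (Fin n) (Fin (n - r)) ℝ) (hV : Vᵀ * V = 1) :
    tailSum r W ≤ frob2 (W * V) := by
  have hS := isHermitian_transpose_mul_self W
  set lam := hS.eigenvalues with hlam
  set σ := Tuple.sort lam with hσ
  set U : Matrix (Fin n) (Fin n) ℝ := (hS.eigenvectorUnitary : Matrix (Fin n) (Fin n) ℝ) with hU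
  set P : Matrix (Fin n) (Fin (n-r)) ℝ := Uᵀ * V with hP
  set c : Fin n → ℝ := fun i => ∑ j, P i j ^ 2 with hc
  have hWt : Wᵀ = Wᴴ := (Matrix.conjTranspose_eq_transpose_of_trivial W).symm
  have hUstar : star U = Uᵀ := by
    rw [Matrix.star_eq_conjTranspose, Matrix.conjTranspose_eq_transpose_of_trivial]
  have hUU : U * Uᵀ = 1 := by
    rw [← hUstar]; exact (Matrix.mem_unitaryGroup_iff).mp hS.eigenvectorUnitary.2
  have hPtP : Pᵀ * P = 1 := by
    rw [hP, Matrix.transpose_mul, Matrix.transpose_transpose, ← Matrix.mul_assoc,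
      Matrix.mul_assoc Vᵀ U Uᵀ, hUU, Matrix.mul_one, hV]
  -- Step A : tailSum as sum of small sorted eigenvalues
  have hA : tailSum r W = ∑ i ∈ Finset.univ.filter (fun i : Fin n => (i:ℕ) < n - r),
      lam (σ i) := by
    rw [tailSum]
    refine Finset.sum_nbij' (fun i => Fin.rev i) (fun i => Fin.rev i) ?_ ?_ ?_ ?_ ?_
    · intro a ha
      simp only [Finset.mem_filter, Finset.mem_univ, true_and, Fin.val_rev] at ha ⊢
      omega
    · intro a ha
      simp only [Finset.mem_filter, Finset.mem_univ, true_and, Fin.val_rev] at ha ⊢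
      omega
    · intro a _; exact Fin.rev_rev a
    · intro a _; exact Fin.rev_rev a
    · intro a _
      rw [sVal, Real.sq_sqrt]
      exact Matrix.eigenvalues_conjTranspose_mul_self_nonneg W _
  -- Step B : frob2 (W V) = ∑ lam i * c i
  have htr : ∀ (M : Matrix (Fin n) (Fin (n-r)) ℝ) (d : Fin n → ℝ),
      Matrix.trace (Mᵀ * Matrix.diagonal d * M) = ∑ i, d i * ∑ j, (M i j)^2 := by
    intro M d
    rw [Matrix.trace_mul_cycle]
    simp only [Matrix.trace, Matrix.diag, Matrix.mul_apply, Matrix.transpose_apply,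
      Matrix.diagonal_apply, mul_ite, mul_zero, Finset.sum_ite_eq', Finset.mem_univ, if_true]
    refine Finset.sum_congr rfl fun i _ => ?_
    rw [Finset.sum_mul, Finset.mul_sum]
    exact Finset.sum_congr rfl fun j _ => by ring
  have hB : frob2 (W * V) = ∑ i, lam i * c i := by
    have h1 : frob2 (W * V) = Matrix.trace ((W * V)ᵀ * ((W * V))) := by
      rw [frob2, Matrix.trace]
      simp only [Matrix.diag, Matrix.mul_apply, Matrix.transpose_apply]
      rw [Finset.sum_comm]
      exact Finset.sum_congr rfl fun i _ => Finset.sum_congr rfl fun j _ => pow_two _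
    rw [h1, Matrix.transpose_mul, Matrix.mul_assoc Vᵀ Wᵀ (W * V), ← Matrix.mul_assoc Wᵀ W V,
      hS.spectral_theorem, Unitary.conjStarAlgAut_apply, hUstar]
    have h2 : Vᵀ * (U * Matrix.diagonal (RCLike.ofReal ∘ lam) * Uᵀ * V)
        = Pᵀ * (Matrix.diagonal (RCLike.ofReal ∘ lam) : Matrix (Fin n) (Fin n) ℝ) * P := by
      rw [hP, Matrix.transpose_mul, Matrix.transpose_transpose]
      simp only [Matrix.mul_assoc]
    rw [h2]
    have h3 : (Matrix.diagonal (RCLike.ofReal ∘ lam) : Matrix (Fin n) (Fin n) ℝ)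
        = Matrix.diagonal lam := rfl
    rw [h3, htr P lam]
  -- properties of c
  have hc0 : ∀ i, 0 ≤ c i := fun i => Finset.sum_nonneg fun j _ => sq_nonneg (P i j)
  have hc1 : ∀ i, c i ≤ 1 := by
    intro i
    set Q := P * Pᵀ with hQ
    have hQQ : Q * Q = Q := by rw [hQ, Matrix.mul_assoc, ← Matrix.mul_assoc Pᵀ P Pᵀ, hPtP, Matrix.one_mul]
    have hQii : Q i i = c i := by simp [hQ, Matrix.mul_apply, hc, sq]
    have hsym : ∀ a b, Q a b = Q b a := by
      intro a b
      simp only [hQ, Matrix.mul_apply, Matrix.transpose_apply]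
      exact Finset.sum_congr rfl fun j _ => by ring
    have hdiag : Q i i = ∑ k, (Q i k)^2 := by
      conv_lhs => rw [← hQQ]
      simp only [Matrix.mul_apply]
      exact Finset.sum_congr rfl fun k _ => by rw [hsym k i]; ring
    have hle : (Q i i)^2 ≤ Q i i :=
      le_of_le_of_eq (Finset.single_le_sum (fun k _ => sq_nonneg (Q i k))
        (Finset.mem_univ i)) hdiag.symm
    nlinarith [hc0 i, hQii]
  have hsumc : ∑ i, c i = ((n - r : ℕ) : ℝ) := by
    have : ∑ i, c i = ∑ j, (Pᵀ * P) j j := by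
      simp only [hc, Matrix.mul_apply, Matrix.transpose_apply]
      rw [Finset.sum_comm]
      exact Finset.sum_congr rfl fun i _ => Finset.sum_congr rfl fun j _ => pow_two _
    rw [this, hPtP]
    simp [Matrix.one_apply]
  -- conclude via comb
  calc tailSum r W = ∑ i ∈ Finset.univ.filter (fun i : Fin n => (i:ℕ) < n - r), lam (σ i) := hA
    _ ≤ ∑ i, (lam ∘ σ) i * (c ∘ σ) i := by
        refine comb n (n-r) (Nat.sub_le n r) (lam ∘ σ) (c ∘ σ) (Tuple.monotone_sort lam)
          (fun i => hc0 _) (fun i => hc1 _) ?_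
        rw [show (∑ i, (c ∘ σ) i) = ∑ i, c i from Equiv.sum_comp σ c, hsumc]
    _ = ∑ i, lam i * c i := Equiv.sum_comp σ (fun i => lam i * c i)
    _ = frob2 (W * V) := hB.symm

lemma enorm2_smul {l : ℕ} (t : ℝ) (v : Fin l → ℝ) : enorm2 (t • v) = t^2 * enorm2 v := by
  simp [enorm2, Finset.mul_sum, mul_pow]

/-- Fréchet subgradient of `f` at `X`, w.r.t. the Frobenius norm and trace inner product. -/
def FSubgrad {m n : ℕ} (f : Matrix (Fin m) (Fin n) ℝ → ℝ) (X Z : Matrix (Fin m) (Fin n) ℝ) : Prop :=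
  ∀ ε > (0:ℝ), ∃ δ > (0:ℝ), ∀ H, frob H < δ →
    f (X + H) - f X - minner Z H ≥ -(ε * frob H)

/-- Limiting (Mordukhovich) subgradient of `f` at `X`. -/
def LSubgrad {m n : ℕ} (f : Matrix (Fin m) (Fin n) ℝ → ℝ) (X Z : Matrix (Fin m) (Fin n) ℝ) : Prop :=
  ∃ Xs Zs : ℕ → Matrix (Fin m) (Fin n) ℝ,
    (∀ k, FSubgrad f (Xs k) (Zs k)) ∧
    Filter.Tendsto (fun k => frob (Xs k - X)) Filter.atTop (nhds 0) ∧
    Filter.Tendsto (fun k => f (Xs k)) Filter.atTop (nhds (f X)) ∧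
    Filter.Tendsto (fun k => frob (Zs k - Z)) Filter.atTop (nhds 0)

/-- `m_f(X) = dist(0, ∂f(X))`: minimal Frobenius norm of limiting subgradients. -/
def slopeF {m n : ℕ} (f : Matrix (Fin m) (Fin n) ℝ → ℝ) (X : Matrix (Fin m) (Fin n) ℝ) : ℝ :=
  sInf {t | ∃ Z, LSubgrad f X Z ∧ t = frob Z}

set_option maxHeartbeats 1000000 in
/-- for `V ∈ E(X)`, any Fréchet subgradient `Z` of
`f(X) = Σ tail σ² + (1/2)‖A X - b‖²` at `X` equals
`∇_X g(X,V) = 2 X V Vᵀ + A*(A X - b)`. -/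
theorem stmt6 (m n r l : ℕ) (hmn : n ≤ m) (hr : r ≤ n)
    (A : Matrix (Fin m) (Fin n) ℝ →ₗ[ℝ] (Fin l → ℝ)) (b : Fin l → ℝ)
    (Aadj : (Fin l → ℝ) → Matrix (Fin m) (Fin n) ℝ)
    (hadj : ∀ (W : Matrix (Fin m) (Fin n) ℝ) (y : Fin l → ℝ),
      minner (Aadj y) W = ∑ i, A W i * y i)
    (X : Matrix (Fin m) (Fin n) ℝ) (V : Matrix (Fin n) (Fin (n - r)) ℝ)
    (hV : Vᵀ * V = 1) (hE : frob2 (X * V) = tailSum r X)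
    (Z : Matrix (Fin m) (Fin n) ℝ)
    (hZ : FSubgrad (fun W => tailSum r W + (1 / 2) * enorm2 (A W - b)) X Z) :
    Z = (2 : ℝ) • (X * V * Vᵀ) + Aadj (A X - b) := by
  set G : Matrix (Fin m) (Fin n) ℝ := (2:ℝ) • (X * V * Vᵀ) + Aadj (A X - b) with hG
  set D : Matrix (Fin m) (Fin n) ℝ := Z - G with hD
  -- key upper bound from the smooth majorant g(·,V)
  have upper : ∀ H : Matrix (Fin m) (Fin n) ℝ,
      tailSum r (X + H) + (1/2) * enorm2 (A (X + H) - b)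
      ≤ (tailSum r X + (1/2) * enorm2 (A X - b)) + minner G H
        + frob2 (H * V) + (1/2) * enorm2 (A H) := by
    intro H
    have h1 : tailSum r (X + H) ≤ frob2 ((X + H) * V) := kyfan r (X + H) V hV
    have h3 : frob2 ((X + H) * V)
        = frob2 (X * V) + 2 * minner (X * V) (H * V) + frob2 (H * V) := by
      rw [Matrix.add_mul, frob2_add]
    have h4 : minner (X * V) (H * V) = minner (X * V * Vᵀ) H := minner_mul_right _ _ _
    have h5 : A (X + H) - b = (A X - b) + A H := by
      rw [map_add]; ext i; simp; ring
    have h6 : enorm2 (A (X + H) - b)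
        = enorm2 (A X - b) + 2 * ∑ i, (A X - b) i * A H i + enorm2 (A H) := by
      rw [h5, enorm2_add]
    have h7 : ∑ i, (A X - b) i * A H i = minner (Aadj (A X - b)) H := by
      rw [hadj]
      exact Finset.sum_congr rfl fun i _ => mul_comm _ _
    have h8 : minner G H = 2 * minner (X * V * Vᵀ) H + minner (Aadj (A X - b)) H := by
      rw [hG, minner_add_left, minner_smul_left]
    linarith [h1, hE]
  suffices hD0 : frob2 D = 0 by
    have hall : ∀ i j, D i j = 0 := by
      intro i j
      have h1 : ∑ j', (D i j')^2 = 0 :=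
        (Finset.sum_eq_zero_iff_of_nonneg
          (fun i' _ => Finset.sum_nonneg fun j' _ => sq_nonneg (D i' j'))).mp hD0 i
          (Finset.mem_univ i)
      have h2 := (Finset.sum_eq_zero_iff_of_nonneg
        (fun j' _ => sq_nonneg (D i j'))).mp h1 j (Finset.mem_univ j)
      exact pow_eq_zero_iff two_ne_zero |>.mp h2
    have hDz : D = 0 := by ext i j; exact hall i j
    have : Z - G = 0 := by rw [← hD]; exact hDz
    exact sub_eq_zero.mp this
  by_contra hne
  have hpos : 0 < frob2 D := lt_of_le_of_ne (frob2_nonneg D) (Ne.symm hne)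
  have hfr : 0 < frob D := Real.sqrt_pos.mpr hpos
  obtain ⟨δ, hδ, hHin⟩ := hZ (frob D / 2) (by positivity)
  set qD : ℝ := frob2 (D * V) + (1/2) * enorm2 (A D) with hqD
  have hq0 : 0 ≤ qD := by
    rw [hqD]
    have := frob2_nonneg (D * V); have := enorm2_nonneg (A D); linarith
  set t : ℝ := min (δ / (2 * (frob D + 1))) (frob2 D / (4 * (qD + 1))) with htdef
  have ht0 : 0 < t := lt_min (by positivity) (by positivity)
  have e1 : frob (t • D) = t * frob D := frob_smul t ht0.le D
  have htδ : frob (t • D) < δ := by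
    rw [e1]
    have h1 : t ≤ δ / (2 * (frob D + 1)) := min_le_left _ _
    have h2 : t * frob D ≤ (δ / (2 * (frob D + 1))) * frob D :=
      mul_le_mul_of_nonneg_right h1 (frob_nonneg D)
    have h3 : (δ / (2 * (frob D + 1))) * frob D < δ := by
      rw [div_mul_eq_mul_div, div_lt_iff₀ (by positivity)]
      nlinarith [frob_nonneg D]
    linarith
  have hineq : tailSum r (X + t • D) + (1/2) * enorm2 (A (X + t • D) - b)
      - (tailSum r X + (1/2) * enorm2 (A X - b)) - minner Z (t • D)
      ≥ -(frob D / 2 * frob (t • D)) := hHin (t • D) htδ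
  have hub := upper (t • D)
  have e3 : frob2 ((t • D) * V) = t^2 * frob2 (D * V) := by
    rw [Matrix.smul_mul, frob2_smul]
  have e5 : enorm2 (A (t • D)) = t^2 * enorm2 (A D) := by
    rw [A.map_smul]; exact enorm2_smul t (A D)
  have e6 : minner Z (t • D) = t * minner Z D := minner_smul_right t Z D
  have e7 : minner G (t • D) = t * minner G D := minner_smul_right t G D
  have e8 : minner Z D - minner G D = frob2 D := by
    rw [← minner_sub_left, ← hD, minner_self]
  rw [e1] at hineq
  rw [e3, e5, e7] at hub
  have e8t : t * minner G D - t * minner Z D = -(t * frob2 D) := by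
    rw [← mul_sub, show minner G D - minner Z D = -(frob2 D) by linarith [e8]]; ring
  have hf2 : frob D / 2 * (t * frob D) = t / 2 * frob2 D := by
    rw [← frob_sq D]; ring
  rw [hf2] at hineq
  rw [e6] at hineq
  -- combine: t/2 * frob2 D ≤ t^2 * qD
  have h9 : t * (frob2 D / 2) ≤ t * (t * qD) := by
    have hqeq : t^2 * frob2 (D * V) + 1/2 * (t^2 * enorm2 (A D)) = t * (t * qD) := by
      rw [hqD]; ring
    have hhalf : t * (frob2 D / 2) = t * frob2 D - t / 2 * frob2 D := by ring
    linarith [hineq, hub, e8t, hqeq, hhalf]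
  have h10 : frob2 D / 2 ≤ t * qD := (mul_le_mul_iff_right₀ ht0).mp h9
  have h11 : t * qD ≤ frob2 D / 4 := by
    have hle : t ≤ frob2 D / (4 * (qD + 1)) := min_le_right _ _
    calc t * qD ≤ t * (qD + 1) := by nlinarith
      _ ≤ (frob2 D / (4 * (qD + 1))) * (qD + 1) :=
          mul_le_mul_of_nonneg_right hle (by linarith)
      _ = frob2 D / 4 := by field_simp
  linarith


end RankEB
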